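/- The Markovian Langlie chain is irreducible with respect to Lebesgue measure on [0,1]: for every x ∈ [0,1] and every Borel set A ⊆ [0,1] of positive Lebesgue measure, there exists n ≥ 1 such that kⁿ(x, A) > 0. -/

import Mathlib

open MeasureTheory

/-- The Markovian Langlie transition kernel on `[0,1]`:
`k(x,·) = H_x · Unif[x/2, x/2+ε] + (1−H_x) · Unif[(x+1)/2−ε, (x+1)/2]`. -/
noncomputable def langlieKernel (H : ℝ → ℝ) (ε : ℝ) (x : ℝ) : Measure ℝ :=
  ENNReal.ofReal (H x) •
      ((ENNReal.ofReal ε)⁻¹ • volume.restrict (Set.Icc (x / 2) (x / 2 + ε))) +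
  ENNReal.ofReal (1 - H x) •
      ((ENNReal.ofReal ε)⁻¹ • volume.restrict (Set.Icc ((x + 1) / 2 - ε) ((x + 1) / 2)))

/-- The `n`-step kernel: `kⁿ⁺¹(x,·)` is obtained by first moving according to `k(x,·)`
and then running `kⁿ`; `k⁰(x,·) = δ_x`. -/
noncomputable def langlieIter (H : ℝ → ℝ) (ε : ℝ) : ℕ → ℝ → Measure ℝ
  | 0 => fun x => Measure.dirac x
  | n + 1 => fun x => (langlieKernel H ε x).bind (langlieIter H ε n)

namespace Langlie

open Set

/-- Parametric measurability of the volume of a moving window. -/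
lemma measurable_vol_slice {s : Set ℝ} (hs : MeasurableSet s) (c L : ℝ) :
    Measurable fun x : ℝ => volume (s ∩ Set.Icc (x / 2 + c) (x / 2 + c + L)) := by
  have hT : MeasurableSet {p : ℝ × ℝ | p.2 ∈ s ∧ p.1 / 2 + c ≤ p.2 ∧ p.2 ≤ p.1 / 2 + c + L} := by
    refine MeasurableSet.inter (hs.preimage measurable_snd) (MeasurableSet.inter ?_ ?_)
    · exact measurableSet_le ((measurable_fst.div_const 2).add_const c) measurable_snd
    · exact measurableSet_le measurable_snd
        (((measurable_fst.div_const 2).add_const c).add_const L)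
  have key : (fun x : ℝ => volume (s ∩ Set.Icc (x / 2 + c) (x / 2 + c + L)))
      = fun x => ∫⁻ u, Set.indicator
          {p : ℝ × ℝ | p.2 ∈ s ∧ p.1 / 2 + c ≤ p.2 ∧ p.2 ≤ p.1 / 2 + c + L} 1 (x, u) ∂volume := by
    funext x
    rw [← lintegral_indicator_one (hs.inter measurableSet_Icc)]
    refine lintegral_congr fun u => ?_
    by_cases hu : u ∈ s ∩ Set.Icc (x / 2 + c) (x / 2 + c + L)
    · have hm2 : (x, u) ∈ {p : ℝ × ℝ | p.2 ∈ s ∧ p.1 / 2 + c ≤ p.2 ∧ p.2 ≤ p.1 / 2 + c + L} :=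
        ⟨hu.1, hu.2.1, hu.2.2⟩
      rw [Set.indicator_of_mem hu, Set.indicator_of_mem hm2]; rfl
    · have hm2 : (x, u) ∉ {p : ℝ × ℝ | p.2 ∈ s ∧ p.1 / 2 + c ≤ p.2 ∧ p.2 ≤ p.1 / 2 + c + L} := by
        intro hmem; exact hu ⟨hmem.1, hmem.2.1, hmem.2.2⟩
      rw [Set.indicator_of_notMem hu, Set.indicator_of_notMem hm2]
  rw [key]
  exact Measurable.lintegral_prod_right' (measurable_one.indicator hT)

lemma measurable_kernel {H : ℝ → ℝ} (hH : Measurable H) (ε : ℝ) :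
    Measurable (langlieKernel H ε) := by
  apply Measure.measurable_of_measurable_coe
  intro s hs
  have e2 : ∀ x : ℝ, Set.Icc ((x + 1) / 2 - ε) ((x + 1) / 2)
      = Set.Icc (x / 2 + (1 / 2 - ε)) (x / 2 + (1 / 2 - ε) + ε) := by
    intro x
    rw [show (x + 1) / 2 - ε = x / 2 + (1 / 2 - ε) by ring,
      show (x + 1) / 2 = x / 2 + (1 / 2 - ε) + ε by ring]
  have e1 : ∀ x : ℝ, Set.Icc (x / 2) (x / 2 + ε)
      = Set.Icc (x / 2 + 0) (x / 2 + 0 + ε) := by intro x; norm_num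
  simp only [langlieKernel, Measure.add_apply, Measure.smul_apply, smul_eq_mul,
    Measure.restrict_apply hs, e1, e2]
  apply Measurable.add
  · exact (ENNReal.measurable_ofReal.comp hH).mul
      (measurable_const.mul (measurable_vol_slice hs 0 ε))
  · exact (ENNReal.measurable_ofReal.comp (measurable_const.sub hH)).mul
      (measurable_const.mul (measurable_vol_slice hs (1 / 2 - ε) ε))

lemma measurable_iter {H : ℝ → ℝ} (hH : Measurable H) (ε : ℝ) :
    ∀ n, Measurable (langlieIter H ε n) := by
  intro n
  induction n with
  | zero => exact Measure.measurable_dirac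
  | succ n ih =>
    show Measurable fun x => (langlieKernel H ε x).bind (langlieIter H ε n)
    exact (Measure.measurable_bind' ih).comp (measurable_kernel hH ε)

end Langlie

namespace Langlie
open Set

lemma kernel_ge {H : ℝ → ℝ} {ε c : ℝ} (hε : 0 < ε) (hc : ∀ x, c ≤ H x ∧ H x ≤ 1 - c)
    (y : ℝ) (b : ℕ) (hb : b ≤ 1) :
    (ENNReal.ofReal c * (ENNReal.ofReal ε)⁻¹) •
      volume.restrict (Set.Icc (y / 2 + (b : ℝ) * ((1 - 2 * ε) / 2))
        (y / 2 + (b : ℝ) * ((1 - 2 * ε) / 2) + ε))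
      ≤ langlieKernel H ε y := by
  rw [Measure.le_iff]
  intro s hs
  interval_cases b
  · have e : Set.Icc (y / 2 + (0 : ℕ) * ((1 - 2 * ε) / 2))
        (y / 2 + (0 : ℕ) * ((1 - 2 * ε) / 2) + ε) = Set.Icc (y / 2) (y / 2 + ε) := by
      norm_num
    rw [e]
    simp only [langlieKernel, Measure.add_apply, Measure.smul_apply, smul_eq_mul]
    calc ENNReal.ofReal c * (ENNReal.ofReal ε)⁻¹ * volume.restrict (Set.Icc (y / 2) (y / 2 + ε)) s
        ≤ ENNReal.ofReal (H y) * ((ENNReal.ofReal ε)⁻¹ *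
            volume.restrict (Set.Icc (y / 2) (y / 2 + ε)) s) := by
          rw [← mul_assoc]
          gcongr
          exact (hc y).1
      _ ≤ _ := le_self_add
  · have e : Set.Icc (y / 2 + (1 : ℕ) * ((1 - 2 * ε) / 2))
        (y / 2 + (1 : ℕ) * ((1 - 2 * ε) / 2) + ε)
        = Set.Icc ((y + 1) / 2 - ε) ((y + 1) / 2) := by
      rw [show y / 2 + (1 : ℕ) * ((1 - 2 * ε) / 2) = (y + 1) / 2 - ε by push_cast; ring,
        show (y + 1) / 2 - ε + ε = (y + 1) / 2 by ring]
    rw [e]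
    simp only [langlieKernel, Measure.add_apply, Measure.smul_apply, smul_eq_mul]
    calc ENNReal.ofReal c * (ENNReal.ofReal ε)⁻¹ *
          volume.restrict (Set.Icc ((y + 1) / 2 - ε) ((y + 1) / 2)) s
        ≤ ENNReal.ofReal (1 - H y) * ((ENNReal.ofReal ε)⁻¹ *
            volume.restrict (Set.Icc ((y + 1) / 2 - ε) ((y + 1) / 2)) s) := by
          rw [← mul_assoc]
          gcongr
          linarith [(hc y).2]
      _ ≤ _ := le_add_self

end Langlie

namespace Langlie
open Set

lemma fubini_bound {A : Set ℝ} (hA : MeasurableSet A) {ε : ℝ} (hε : 0 < ε)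
    (q t ℓ δ m : ℝ) (hm : 1 ≤ m) (hδ : 0 < δ) (hδε : m * δ ≤ ε) (hℓ : ε ≤ ℓ) :
    ENNReal.ofReal (m * δ) *
      volume (A ∩ Set.Icc (q / m + t + δ) (q / m + t + ℓ + ε / m - δ))
      ≤ ∫⁻ z in Set.Icc q (q + ε), volume (A ∩ Set.Icc (z / m + t) (z / m + t + ℓ)) := by
  have hm0 : (0 : ℝ) < m := lt_of_lt_of_le one_pos hm
  set S : Set (ℝ × ℝ) := {p | p.2 ∈ A ∧ p.1 / m + t ≤ p.2 ∧ p.2 ≤ p.1 / m + t + ℓ} with hS_def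
  have hS : MeasurableSet S := by
    refine MeasurableSet.inter (hA.preimage measurable_snd) (MeasurableSet.inter ?_ ?_)
    · exact measurableSet_le ((measurable_fst.div_const m).add_const t) measurable_snd
    · exact measurableSet_le measurable_snd
        (((measurable_fst.div_const m).add_const t).add_const ℓ)
  have hrw : ∀ z : ℝ, volume (A ∩ Set.Icc (z / m + t) (z / m + t + ℓ))
      = ∫⁻ u, S.indicator 1 (z, u) ∂volume := by
    intro z
    rw [← lintegral_indicator_one (hA.inter measurableSet_Icc)]
    refine lintegral_congr fun u => ?_
    by_cases hu : u ∈ A ∩ Set.Icc (z / m + t) (z / m + t + ℓ)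
    · have hm2 : (z, u) ∈ S := ⟨hu.1, hu.2.1, hu.2.2⟩
      rw [Set.indicator_of_mem hu, Set.indicator_of_mem hm2]; rfl
    · have hm2 : (z, u) ∉ S := fun hmem => hu ⟨hmem.1, hmem.2.1, hmem.2.2⟩
      rw [Set.indicator_of_notMem hu, Set.indicator_of_notMem hm2]
  have hswap : ∫⁻ z in Set.Icc q (q + ε), volume (A ∩ Set.Icc (z / m + t) (z / m + t + ℓ))
      = ∫⁻ u, ∫⁻ z in Set.Icc q (q + ε), S.indicator 1 (z, u) ∂volume ∂volume := by
    simp_rw [hrw]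
    exact lintegral_lintegral_swap (measurable_one.indicator hS).aemeasurable
  rw [hswap]
  have hpoint : ∀ u : ℝ,
      ((A ∩ Set.Icc (q / m + t + δ) (q / m + t + ℓ + ε / m - δ)).indicator
        (fun _ => ENNReal.ofReal (m * δ))) u
      ≤ ∫⁻ z in Set.Icc q (q + ε), S.indicator 1 (z, u) ∂volume := by
    intro u
    by_cases hu : u ∈ A ∩ Set.Icc (q / m + t + δ) (q / m + t + ℓ + ε / m - δ)
    · rw [Set.indicator_of_mem hu]
      have hufun : (fun z => S.indicator 1 (z, u))
          = (Set.Icc (m * (u - t - ℓ)) (m * (u - t))).indicator (fun _ => (1 : ENNReal)) := by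
        funext z
        have lem1 : (z / m + t ≤ u) ↔ z ≤ m * (u - t) := by
          rw [show m * (u - t) = (u - t) * m by ring, ← div_le_iff₀ hm0]
          constructor <;> intro <;> linarith
        have lem2 : (u ≤ z / m + t + ℓ) ↔ m * (u - t - ℓ) ≤ z := by
          rw [show m * (u - t - ℓ) = (u - t - ℓ) * m by ring, ← le_div_iff₀ hm0]
          constructor <;> intro <;> linarith
        have hiff : ((z, u) ∈ S) ↔ z ∈ Set.Icc (m * (u - t - ℓ)) (m * (u - t)) := by
          simp only [hS_def, Set.mem_setOf_eq, Set.mem_Icc, hu.1, true_and, lem1, lem2]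
          tauto
        by_cases hz : z ∈ Set.Icc (m * (u - t - ℓ)) (m * (u - t))
        · rw [Set.indicator_of_mem hz, Set.indicator_of_mem (hiff.2 hz)]; rfl
        · rw [Set.indicator_of_notMem hz, Set.indicator_of_notMem (fun h => hz (hiff.1 h))]
      rw [hufun]
      rw [lintegral_indicator_const measurableSet_Icc, one_mul,
        Measure.restrict_apply measurableSet_Icc, Set.Icc_inter_Icc, Real.volume_Icc]
      apply ENNReal.ofReal_le_ofReal
      -- real inequality
      obtain ⟨hu1, hu2⟩ := hu.2
      have hq : m * (q / m) = q := by field_simp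
      have h1 : q + m * δ ≤ m * (u - t) := by
        have := mul_le_mul_of_nonneg_left hu1 hm0.le
        nlinarith [hq]
      have h2 : m * (u - t - ℓ) ≤ q + ε - m * δ := by
        have := mul_le_mul_of_nonneg_left hu2 hm0.le
        have hq2 : m * (ε / m) = ε := by field_simp
        nlinarith [hq, hq2]
      have h4 : ℓ ≤ m * ℓ := by nlinarith
      rcases le_total (m * (u - t)) (q + ε) with h | h <;>
        rcases le_total (m * (u - t - ℓ)) q with h' | h' <;>
        simp [min_eq_left, min_eq_right, max_eq_left, max_eq_right, h, h'] <;> linarith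
    · rw [Set.indicator_of_notMem hu]; exact zero_le
  calc ENNReal.ofReal (m * δ) *
        volume (A ∩ Set.Icc (q / m + t + δ) (q / m + t + ℓ + ε / m - δ))
      = ∫⁻ u, ((A ∩ Set.Icc (q / m + t + δ) (q / m + t + ℓ + ε / m - δ)).indicator
          (fun _ => ENNReal.ofReal (m * δ))) u ∂volume := by
        rw [lintegral_indicator_const (hA.inter measurableSet_Icc)]
    _ ≤ _ := lintegral_mono hpoint

end Langlie

namespace Langlie
open Set

lemma main_bound {H : ℝ → ℝ} {ε c η : ℝ} (hHm : Measurable H)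
    (hε : 0 < ε) (hε' : ε < 1 / 2) (hη : 0 < η) (hη1 : η ≤ 1)
    (hH : ∀ x, c ≤ H x ∧ H x ≤ 1 - c) :
    ∀ n : ℕ, 1 ≤ n → ∀ y ∈ Set.Icc (0 : ℝ) 1, ∀ k : ℕ, k < 2 ^ n →
      ∀ A : Set ℝ, MeasurableSet A →
      (ENNReal.ofReal c * (ENNReal.ofReal ε)⁻¹ * ENNReal.ofReal (η * ε / 2)) ^ n *
        volume (A ∩ Set.Icc
          ((y + (1 - 2 * ε) * k) / 2 ^ n + η * ε / 2 * (1 - 2 / 2 ^ n))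
          ((y + (1 - 2 * ε) * k) / 2 ^ n + η * ε / 2 * (1 - 2 / 2 ^ n)
            + (ε + (1 - η) * ε * (1 - 2 / 2 ^ n))))
        ≤ langlieIter H ε n y A := by
  intro n hn
  induction n, hn using Nat.le_induction with
  | base =>
    intro y hy k hk A hA
    have hk1 : k ≤ 1 := by
      have : k < 2 := by simpa using hk
      omega
    have h1 : langlieIter H ε 1 y = langlieKernel H ε y := by
      simp only [langlieIter]
      exact Measure.bind_dirac
    rw [h1, pow_one]
    simp only [show (1 : ℝ) - 2 / 2 ^ 1 = 0 by norm_num, mul_zero, add_zero]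
    rw [show (y + (1 - 2 * ε) * (k : ℝ)) / 2 ^ 1 = y / 2 + (k : ℝ) * ((1 - 2 * ε) / 2) by ring]
    have hker := Measure.le_iff'.1 (kernel_ge hε hH y k hk1) A
    rw [Measure.smul_apply, smul_eq_mul, Measure.restrict_apply hA] at hker
    refine le_trans (mul_le_mul_left ?_ _) hker
    calc ENNReal.ofReal c * (ENNReal.ofReal ε)⁻¹ * ENNReal.ofReal (η * ε / 2)
        ≤ ENNReal.ofReal c * (ENNReal.ofReal ε)⁻¹ * 1 := by
          gcongr
          exact ENNReal.ofReal_le_one.2 (by nlinarith)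
      _ = ENNReal.ofReal c * (ENNReal.ofReal ε)⁻¹ := mul_one _
  | succ n hn ih =>
    intro y hy k' hk' A hA
    set b : ℕ := k' % 2 with hb_def
    set k : ℕ := k' / 2 with hk_def
    have hb : b ≤ 1 := by omega
    have hk : k < 2 ^ n := by
      rw [pow_succ] at hk'
      exact (Nat.div_lt_iff_lt_mul (by norm_num)).2 hk'
    have hk'2 : k' = 2 * k + b := by omega
    have hkr : (k' : ℝ) = 2 * (k : ℝ) + (b : ℝ) := by rw [hk'2]; push_cast; ring
    have h2n0 : ((2 : ℝ) ^ n) ≠ 0 := by positivity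
    have hm1 : (1 : ℝ) ≤ 2 ^ n := by
      simpa using pow_le_pow_right₀ one_le_two (Nat.zero_le n)
    have hm2 : (2 : ℝ) ≤ 2 ^ n := by
      calc (2 : ℝ) = 2 ^ 1 := (pow_one 2).symm
        _ ≤ 2 ^ n := pow_le_pow_right₀ one_le_two hn
    have h2m : (0 : ℝ) ≤ 1 - 2 / 2 ^ n := by
      rw [sub_nonneg, div_le_one (by positivity)]
      exact hm2
    have hℓε : ε ≤ ε + (1 - η) * ε * (1 - 2 / 2 ^ n) := by
      have := mul_nonneg (mul_nonneg (by linarith : (0:ℝ) ≤ 1 - η) hε.le) h2m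
      linarith
    have hδpos : (0 : ℝ) < η * ε / 2 / 2 ^ n := by positivity
    have hmδ : (2 : ℝ) ^ n * (η * ε / 2 / 2 ^ n) = η * ε / 2 := by field_simp
    have hδε : (2 : ℝ) ^ n * (η * ε / 2 / 2 ^ n) ≤ ε := by rw [hmδ]; nlinarith
    have hbr : (b : ℝ) ≤ 1 := by exact_mod_cast hb
    have hb0 : (0 : ℝ) ≤ (b : ℝ) := Nat.cast_nonneg b
    have hq01 : Set.Icc (y / 2 + (b : ℝ) * ((1 - 2 * ε) / 2))
        (y / 2 + (b : ℝ) * ((1 - 2 * ε) / 2) + ε) ⊆ Set.Icc (0 : ℝ) 1 := by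
      intro z hz
      obtain ⟨hz1, hz2⟩ := hz
      constructor
      · nlinarith [hy.1]
      · nlinarith [hy.2]
    have hDtop : (ENNReal.ofReal c * (ENNReal.ofReal ε)⁻¹ * ENNReal.ofReal (η * ε / 2)) ≠ ⊤ :=
      ENNReal.mul_ne_top
        (ENNReal.mul_ne_top ENNReal.ofReal_ne_top
          (ENNReal.inv_ne_top.2 (by simp [ENNReal.ofReal_pos.2 hε, (ENNReal.ofReal_pos.2 hε).ne'])))
        ENNReal.ofReal_ne_top
    have hDn_ne_top : (ENNReal.ofReal c * (ENNReal.ofReal ε)⁻¹ * ENNReal.ofReal (η * ε / 2)) ^ n ≠ ⊤ :=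
      ENNReal.pow_ne_top hDtop
    have hbind : langlieIter H ε (n + 1) y A
        = ∫⁻ z, langlieIter H ε n z A ∂(langlieKernel H ε y) := by
      simp only [langlieIter]
      exact Measure.bind_apply hA (measurable_iter hHm ε n).aemeasurable
    have Eq1 : (y + (1 - 2 * ε) * (k' : ℝ)) / 2 ^ (n + 1) + η * ε / 2 * (1 - 2 / 2 ^ (n + 1))
        = (y / 2 + (b : ℝ) * ((1 - 2 * ε) / 2)) / 2 ^ n
          + ((1 - 2 * ε) * (k : ℝ) / 2 ^ n + η * ε / 2 * (1 - 2 / 2 ^ n))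
          + η * ε / 2 / 2 ^ n := by
      rw [hkr, pow_succ]
      field_simp
      ring
    have Eq2 : (y + (1 - 2 * ε) * (k' : ℝ)) / 2 ^ (n + 1) + η * ε / 2 * (1 - 2 / 2 ^ (n + 1))
          + (ε + (1 - η) * ε * (1 - 2 / 2 ^ (n + 1)))
        = (y / 2 + (b : ℝ) * ((1 - 2 * ε) / 2)) / 2 ^ n
          + ((1 - 2 * ε) * (k : ℝ) / 2 ^ n + η * ε / 2 * (1 - 2 / 2 ^ n))
          + (ε + (1 - η) * ε * (1 - 2 / 2 ^ n)) + ε / 2 ^ n - η * ε / 2 / 2 ^ n := by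
      rw [hkr, pow_succ]
      field_simp
      ring
    rw [Eq2, Eq1]
    calc (ENNReal.ofReal c * (ENNReal.ofReal ε)⁻¹ * ENNReal.ofReal (η * ε / 2)) ^ (n + 1) *
          volume (A ∩ Set.Icc
            ((y / 2 + (b : ℝ) * ((1 - 2 * ε) / 2)) / 2 ^ n
              + ((1 - 2 * ε) * (k : ℝ) / 2 ^ n + η * ε / 2 * (1 - 2 / 2 ^ n))
              + η * ε / 2 / 2 ^ n)
            ((y / 2 + (b : ℝ) * ((1 - 2 * ε) / 2)) / 2 ^ n
              + ((1 - 2 * ε) * (k : ℝ) / 2 ^ n + η * ε / 2 * (1 - 2 / 2 ^ n))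
              + (ε + (1 - η) * ε * (1 - 2 / 2 ^ n)) + ε / 2 ^ n - η * ε / 2 / 2 ^ n))
        = (ENNReal.ofReal c * (ENNReal.ofReal ε)⁻¹) *
            ((ENNReal.ofReal c * (ENNReal.ofReal ε)⁻¹ * ENNReal.ofReal (η * ε / 2)) ^ n *
              (ENNReal.ofReal ((2 : ℝ) ^ n * (η * ε / 2 / 2 ^ n)) * volume (A ∩ Set.Icc _ _))) := by
          rw [hmδ]
          ring
      _ ≤ (ENNReal.ofReal c * (ENNReal.ofReal ε)⁻¹) *
            ((ENNReal.ofReal c * (ENNReal.ofReal ε)⁻¹ * ENNReal.ofReal (η * ε / 2)) ^ n *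
              ∫⁻ z in Set.Icc (y / 2 + (b : ℝ) * ((1 - 2 * ε) / 2))
                  (y / 2 + (b : ℝ) * ((1 - 2 * ε) / 2) + ε),
                volume (A ∩ Set.Icc
                  (z / 2 ^ n + ((1 - 2 * ε) * (k : ℝ) / 2 ^ n + η * ε / 2 * (1 - 2 / 2 ^ n)))
                  (z / 2 ^ n + ((1 - 2 * ε) * (k : ℝ) / 2 ^ n + η * ε / 2 * (1 - 2 / 2 ^ n))
                    + (ε + (1 - η) * ε * (1 - 2 / 2 ^ n))))) := by
          gcongr
          exact fubini_bound hA hε _ _ _ _ _ hm1 hδpos hδε hℓε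
      _ = (ENNReal.ofReal c * (ENNReal.ofReal ε)⁻¹) *
            ∫⁻ z in Set.Icc (y / 2 + (b : ℝ) * ((1 - 2 * ε) / 2))
                (y / 2 + (b : ℝ) * ((1 - 2 * ε) / 2) + ε),
              (ENNReal.ofReal c * (ENNReal.ofReal ε)⁻¹ * ENNReal.ofReal (η * ε / 2)) ^ n *
                volume (A ∩ Set.Icc
                  (z / 2 ^ n + ((1 - 2 * ε) * (k : ℝ) / 2 ^ n + η * ε / 2 * (1 - 2 / 2 ^ n)))
                  (z / 2 ^ n + ((1 - 2 * ε) * (k : ℝ) / 2 ^ n + η * ε / 2 * (1 - 2 / 2 ^ n))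
                    + (ε + (1 - η) * ε * (1 - 2 / 2 ^ n)))) := by
          rw [lintegral_const_mul' _ _ hDn_ne_top]
      _ ≤ (ENNReal.ofReal c * (ENNReal.ofReal ε)⁻¹) *
            ∫⁻ z in Set.Icc (y / 2 + (b : ℝ) * ((1 - 2 * ε) / 2))
                (y / 2 + (b : ℝ) * ((1 - 2 * ε) / 2) + ε),
              langlieIter H ε n z A := by
          refine mul_le_mul_right (setLIntegral_mono
            ((Measure.measurable_coe hA).comp (measurable_iter hHm ε n)) ?_) _
          intro z hz
          have hz01 : z ∈ Set.Icc (0 : ℝ) 1 := hq01 hz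
          have hih := ih z hz01 k hk A hA
          rw [show z / 2 ^ n + ((1 - 2 * ε) * (k : ℝ) / 2 ^ n + η * ε / 2 * (1 - 2 / 2 ^ n))
              = (z + (1 - 2 * ε) * (k : ℝ)) / 2 ^ n + η * ε / 2 * (1 - 2 / 2 ^ n) by ring]
          exact hih
      _ ≤ langlieIter H ε (n + 1) y A := by
          rw [hbind, ← smul_eq_mul (a := ENNReal.ofReal c * (ENNReal.ofReal ε)⁻¹), ← lintegral_smul_measure]
          exact lintegral_mono' (kernel_ge hε hH y b hb) le_rfl

end Langlie

namespace Langlie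
open Set

set_option maxHeartbeats 1000000 in
lemma coverage {ε η y θ : ℝ} (hε : 0 < ε) (hε' : ε < 1 / 2) (hη : 0 < η) (hη1 : η ≤ 1)
    (hy : y ∈ Set.Icc (0 : ℝ) 1) (n : ℕ) (hn : 1 ≤ n)
    (hεn : 1 ≤ (2 : ℝ) ^ n * ε)
    (h1 : 1 / (2 : ℝ) ^ n + η * ε / 2 ≤ θ)
    (h2 : η * ε + 1 / (2 : ℝ) ^ n ≤ θ) :
    Set.Icc θ (1 - θ) ⊆ ⋃ k ∈ Finset.range (2 ^ n),
      Set.Icc ((y + (1 - 2 * ε) * k) / 2 ^ n + η * ε / 2 * (1 - 2 / 2 ^ n))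
        ((y + (1 - 2 * ε) * k) / 2 ^ n + η * ε / 2 * (1 - 2 / 2 ^ n)
          + (ε + (1 - η) * ε * (1 - 2 / 2 ^ n))) := by
  intro u hu
  obtain ⟨hu1, hu2⟩ := hu
  have hm0 : (0 : ℝ) < 2 ^ n := by positivity
  have hm1 : (1 : ℝ) ≤ 2 ^ n := by
    simpa using pow_le_pow_right₀ one_le_two (Nat.zero_le n)
  have hm2 : (2 : ℝ) ≤ 2 ^ n := by
    calc (2 : ℝ) = 2 ^ 1 := (pow_one 2).symm
      _ ≤ 2 ^ n := pow_le_pow_right₀ one_le_two hn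
  have h2m : (0 : ℝ) ≤ 1 - 2 / 2 ^ n := by
    rw [sub_nonneg, div_le_one hm0]; exact hm2
  have hβ : (0 : ℝ) < 1 - 2 * ε := by linarith
  have ho0 : (0 : ℝ) ≤ η * ε / 2 * (1 - 2 / 2 ^ n) := by positivity
  have ho : η * ε / 2 * (1 - 2 / 2 ^ n) ≤ η * ε / 2 := by
    nlinarith [mul_nonneg (by positivity : (0:ℝ) ≤ η * ε / 2) (by positivity : (0:ℝ) ≤ 2 / 2 ^ n)]
  have hym : y / 2 ^ n * 2 ^ n = y := div_mul_cancel₀ y hm0.ne'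
  have hy1m : y / 2 ^ n ≤ 1 / 2 ^ n := by gcongr; exact hy.2
  have hy0m : 0 ≤ y / 2 ^ n := div_nonneg hy.1 hm0.le
  have hox : y / 2 ^ n + η * ε / 2 * (1 - 2 / 2 ^ n) ≤ u := by linarith
  set r : ℝ := (u - y / 2 ^ n - η * ε / 2 * (1 - 2 / 2 ^ n)) * 2 ^ n / (1 - 2 * ε) with hr_def
  have hr0 : 0 ≤ r := div_nonneg (mul_nonneg (by linarith) hm0.le) hβ.le
  set k : ℕ := min ⌊r⌋₊ (2 ^ n - 1) with hk_def
  have h2npos : 0 < 2 ^ n := pow_pos (by norm_num : (0 : ℕ) < 2) n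
  have hkmem : k ∈ Finset.range (2 ^ n) :=
    Finset.mem_range.2 (Nat.lt_of_le_of_lt (min_le_right _ _) (Nat.sub_lt h2npos one_pos))
  have hkr : (k : ℝ) ≤ r :=
    le_trans (Nat.cast_le.2 (min_le_left _ _)) (Nat.floor_le hr0)
  have hβr : (1 - 2 * ε) * r = (u - y / 2 ^ n - η * ε / 2 * (1 - 2 / 2 ^ n)) * 2 ^ n := by
    rw [hr_def, mul_comm, div_mul_cancel₀ _ hβ.ne']
  have hexp : (u - y / 2 ^ n - η * ε / 2 * (1 - 2 / 2 ^ n)) * 2 ^ n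
      = u * 2 ^ n - y - η * ε / 2 * (1 - 2 / 2 ^ n) * 2 ^ n := by
    rw [sub_mul, sub_mul, hym]
  have hℓε : ε ≤ ε + (1 - η) * ε * (1 - 2 / 2 ^ n) := by
    have := mul_nonneg (mul_nonneg (by linarith : (0 : ℝ) ≤ 1 - η) hε.le) h2m
    linarith
  refine Set.mem_iUnion₂.2 ⟨k, hkmem, ?_, ?_⟩
  · -- lower bound
    have hb1 : (1 - 2 * ε) * (k : ℝ) ≤ (1 - 2 * ε) * r := mul_le_mul_of_nonneg_left hkr hβ.le
    rw [hβr, hexp] at hb1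
    have goal2 : y + (1 - 2 * ε) * (k : ℝ)
        ≤ (u - η * ε / 2 * (1 - 2 / 2 ^ n)) * 2 ^ n := by
      have e : (u - η * ε / 2 * (1 - 2 / 2 ^ n)) * 2 ^ n
          = u * 2 ^ n - η * ε / 2 * (1 - 2 / 2 ^ n) * 2 ^ n := by ring
      linarith [e]
    have := (div_le_iff₀ hm0).2 goal2
    linarith
  · -- upper bound
    by_cases hc : ⌊r⌋₊ ≤ 2 ^ n - 1
    · have hkc : k = ⌊r⌋₊ := min_eq_left hc
      have hrk : r < (k : ℝ) + 1 := by
        rw [hkc]; exact_mod_cast Nat.lt_floor_add_one r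
      have hb1 : (1 - 2 * ε) * r < (1 - 2 * ε) * ((k : ℝ) + 1) :=
        mul_lt_mul_of_pos_left hrk hβ
      rw [hβr, hexp] at hb1
      have hβm : (1 - 2 * ε) / 2 ^ n ≤ ε := by
        rw [div_le_iff₀ hm0]; nlinarith
      have hβ2 : (1 - 2 * ε) / 2 ^ n * 2 ^ n = 1 - 2 * ε := div_mul_cancel₀ _ hm0.ne'
      have goal2 : (u - η * ε / 2 * (1 - 2 / 2 ^ n) - (1 - 2 * ε) / 2 ^ n) * 2 ^ n
          ≤ y + (1 - 2 * ε) * (k : ℝ) := by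
        have e : (u - η * ε / 2 * (1 - 2 / 2 ^ n) - (1 - 2 * ε) / 2 ^ n) * 2 ^ n
            = u * 2 ^ n - η * ε / 2 * (1 - 2 / 2 ^ n) * 2 ^ n
              - (1 - 2 * ε) / 2 ^ n * 2 ^ n := by ring
        rw [e, hβ2]
        linarith
      have hdiv := (le_div_iff₀ hm0).2 goal2
      linarith [hdiv, hβm, hℓε]
    · have hkc : k = 2 ^ n - 1 := min_eq_right (le_of_not_ge hc)
      have hkcast : (k : ℝ) = 2 ^ n - 1 := by
        rw [hkc]
        push_cast [Nat.cast_sub (Nat.one_le_two_pow)]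
        norm_num
      have e1 : (1 - 2 * ε) * ((2 : ℝ) ^ n - 1) / 2 ^ n = (1 - 2 * ε) - (1 - 2 * ε) / 2 ^ n := by
        field_simp
      have e2 : (1 - η) * ε * (1 - 2 / 2 ^ n) = (1 - η) * ε - 2 * (1 - η) * ε / 2 ^ n := by
        field_simp
      have e3 : (1 - 2 * ε) / 2 ^ n + 2 * (1 - η) * ε / 2 ^ n ≤ 1 / 2 ^ n := by
        rw [show (1 - 2 * ε) / 2 ^ n + 2 * (1 - η) * ε / 2 ^ n
            = ((1 - 2 * ε) + 2 * (1 - η) * ε) / 2 ^ n by ring]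
        gcongr
        nlinarith
      have e4 : (y + (1 - 2 * ε) * (k : ℝ)) / 2 ^ n
          = y / 2 ^ n + (1 - 2 * ε) * ((2 : ℝ) ^ n - 1) / 2 ^ n := by
        rw [hkcast]; ring
      rw [e4, e1, e2]
      linarith [e3, hu2, h2, hy0m, ho0]
end Langlie

namespace Langlie
open Set

lemma transfer {H H' : ℝ → ℝ} {ε : ℝ} (hε : 0 < ε) (hε' : ε < 1 / 2)
    (hagree : ∀ t ∈ Set.Icc (0 : ℝ) 1, H t = H' t) :
    ∀ n, ∀ y ∈ Set.Icc (0 : ℝ) 1, langlieIter H ε n y = langlieIter H' ε n y := by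
  intro n
  induction n with
  | zero => intro y _; rfl
  | succ n ih =>
    intro y hy
    obtain ⟨hy1, hy2⟩ := hy
    have hker : langlieKernel H ε y = langlieKernel H' ε y := by
      unfold langlieKernel
      rw [hagree y ⟨hy1, hy2⟩]
    have hsub1 : Set.Icc (y / 2) (y / 2 + ε) ⊆ Set.Icc (0 : ℝ) 1 := by
      intro z hz
      obtain ⟨h1, h2⟩ := hz
      exact ⟨by linarith, by linarith⟩
    have hsub2 : Set.Icc ((y + 1) / 2 - ε) ((y + 1) / 2) ⊆ Set.Icc (0 : ℝ) 1 := by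
      intro z hz
      obtain ⟨h1, h2⟩ := hz
      exact ⟨by linarith, by linarith⟩
    have hcm : MeasurableSet {z : ℝ | ¬ z ∈ Set.Icc (0 : ℝ) 1} :=
      (measurableSet_Icc : MeasurableSet (Set.Icc (0:ℝ) 1)).compl
    have hnull : langlieKernel H ε y {z : ℝ | ¬ z ∈ Set.Icc (0 : ℝ) 1} = 0 := by
      have e1 : {z : ℝ | ¬ z ∈ Set.Icc (0 : ℝ) 1} ∩ Set.Icc (y / 2) (y / 2 + ε) = ∅ := by
        ext z
        simp only [Set.mem_inter_iff, Set.mem_setOf_eq, Set.mem_empty_iff_false, iff_false,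
          not_and]
        intro h1 h2
        exact h1 (hsub1 h2)
      have e2 : {z : ℝ | ¬ z ∈ Set.Icc (0 : ℝ) 1}
          ∩ Set.Icc ((y + 1) / 2 - ε) ((y + 1) / 2) = ∅ := by
        ext z
        simp only [Set.mem_inter_iff, Set.mem_setOf_eq, Set.mem_empty_iff_false, iff_false,
          not_and]
        intro h1 h2
        exact h1 (hsub2 h2)
      simp only [langlieKernel, Measure.add_apply, Measure.smul_apply, smul_eq_mul,
        Measure.restrict_apply hcm, e1, e2, measure_empty, mul_zero, add_zero]
    have hae : langlieIter H ε n =ᵐ[langlieKernel H ε y] langlieIter H' ε n := by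
      have haein : ∀ᵐ z ∂(langlieKernel H ε y), z ∈ Set.Icc (0 : ℝ) 1 := by
        rw [MeasureTheory.ae_iff]
        exact hnull
      exact haein.mono fun z hz => ih z hz
    show Measure.bind (langlieKernel H ε y) (langlieIter H ε n)
        = Measure.bind (langlieKernel H' ε y) (langlieIter H' ε n)
    rw [← hker]
    show ((langlieKernel H ε y).map (langlieIter H ε n)).join
        = ((langlieKernel H ε y).map (langlieIter H' ε n)).join
    rw [Measure.map_congr hae]

end Langlie

/-- The Markovian Langlie chain is irreducible w.r.t. Lebesgue measure on `[0,1]`: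
for every `x ∈ [0,1]` and every Borel `A ⊆ [0,1]` of positive Lebesgue measure there
is `n ≥ 1` with `kⁿ(x, A) > 0`. -/
theorem stmt_10 (H : ℝ → ℝ) (ε : ℝ) (hε : 0 < ε) (hε' : ε < 1 / 2)
    (hHcont : ContinuousOn H (Set.Icc 0 1))
    (hH01 : ∀ x ∈ Set.Icc (0 : ℝ) 1, H x ∈ Set.Ioo (0 : ℝ) 1) :
    ∀ x ∈ Set.Icc (0 : ℝ) 1, ∀ A : Set ℝ, A ⊆ Set.Icc (0 : ℝ) 1 → MeasurableSet A →
      0 < volume A → ∃ n : ℕ, 1 ≤ n ∧ 0 < langlieIter H ε n x A := by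
  intro x hx A hAsub hA hApos
  -- clamping function and the modified H
  set cl : ℝ → ℝ := fun t => min (max t 0) 1 with hcl_def
  have hcl_cont : Continuous cl := (continuous_id.max continuous_const).min continuous_const
  have hcl_mem : ∀ t, cl t ∈ Set.Icc (0 : ℝ) 1 :=
    fun t => ⟨le_min (le_max_right t 0) zero_le_one, min_le_right _ _⟩
  have hcl_id : ∀ t ∈ Set.Icc (0 : ℝ) 1, cl t = t := by
    intro t ht
    show min (max t 0) 1 = t
    rw [max_eq_left ht.1, min_eq_left ht.2]
  set H' : ℝ → ℝ := fun t => H (cl t) with hH'_def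
  have hH'cont : Continuous H' := hHcont.comp_continuous hcl_cont hcl_mem
  have hH'm : Measurable H' := hH'cont.measurable
  have hagree : ∀ t ∈ Set.Icc (0 : ℝ) 1, H t = H' t := by
    intro t ht
    show H t = H (cl t)
    rw [hcl_id t ht]
  -- uniform bounds for H'
  obtain ⟨a, ha, hamin⟩ := isCompact_Icc.exists_isMinOn
    (Set.nonempty_Icc.2 zero_le_one) hHcont
  obtain ⟨bb, hbb, hbmax⟩ := isCompact_Icc.exists_isMaxOn
    (Set.nonempty_Icc.2 zero_le_one) hHcont
  set c : ℝ := min (H a) (1 - H bb) with hc_def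
  have hc : 0 < c := lt_min (hH01 a ha).1 (by linarith [(hH01 bb hbb).2])
  have hH'bounds : ∀ t, c ≤ H' t ∧ H' t ≤ 1 - c := by
    intro t
    have h1 : H a ≤ H (cl t) := isMinOn_iff.1 hamin _ (hcl_mem t)
    have h2 : H (cl t) ≤ H bb := isMaxOn_iff.1 hbmax _ (hcl_mem t)
    constructor
    · exact le_trans (min_le_left _ _) h1
    · have := min_le_right (H a) (1 - H bb)
      show H (cl t) ≤ 1 - c
      linarith
  -- choose a compact core of A with positive measure
  have hA01 : 0 < volume (A ∩ Set.Ioo (0 : ℝ) 1) := by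
    have hdiff : volume (A \ Set.Ioo (0 : ℝ) 1) = 0 := by
      refine measure_mono_null ?_
        (((Set.finite_singleton (1:ℝ)).insert 0).measure_zero volume)
      rintro z ⟨hzA, hz⟩
      have hz01 := hAsub hzA
      by_cases hz0 : z = 0
      · exact Or.inl hz0
      right
      have : ¬ (0 < z ∧ z < 1) := fun hc => hz ⟨hc.1, hc.2⟩
      rcases lt_or_eq_of_le hz01.1 with h | h
      · rcases lt_or_eq_of_le hz01.2 with h' | h'
        · exact absurd ⟨h, h'⟩ this
        · exact h'
      · exact absurd h.symm hz0
    have hsplit := measure_inter_add_diff (μ := volume) A (measurableSet_Ioo : MeasurableSet (Set.Ioo (0:ℝ) 1))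
    by_contra h
    push_neg at h
    have h0 : volume (A ∩ Set.Ioo (0 : ℝ) 1) = 0 := le_antisymm h zero_le
    rw [h0, hdiff, add_zero] at hsplit
    exact hApos.ne' hsplit.symm
  obtain ⟨j, hj⟩ : ∃ j : ℕ, 0 < volume (A ∩ Set.Icc (1 / ((j : ℝ) + 1)) (1 - 1 / ((j : ℝ) + 1))) := by
    by_contra h
    push_neg at h
    have hz : volume (⋃ j : ℕ, A ∩ Set.Icc (1 / ((j : ℝ) + 1)) (1 - 1 / ((j : ℝ) + 1))) = 0 :=
      measure_iUnion_null fun j => le_antisymm (h j) zero_le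
    have hcov : A ∩ Set.Ioo 0 1
        ⊆ ⋃ j : ℕ, A ∩ Set.Icc (1 / ((j : ℝ) + 1)) (1 - 1 / ((j : ℝ) + 1)) := by
      rintro u ⟨huA, hu0, hu1⟩
      obtain ⟨j, hjlt⟩ := exists_nat_one_div_lt (show (0 : ℝ) < min u (1 - u) from
        lt_min hu0 (by linarith))
      refine Set.mem_iUnion.2 ⟨j, huA, ?_, ?_⟩
      · exact le_of_lt (lt_of_lt_of_le hjlt (min_le_left _ _))
      · have := lt_of_lt_of_le hjlt (min_le_right _ _)
        linarith
    exact hA01.ne' (measure_mono_null hcov hz)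
  set θ : ℝ := 1 / ((j : ℝ) + 1) with hθ_def
  have hθ : 0 < θ := by positivity
  set η : ℝ := 1 / (2 * ((j : ℝ) + 1) * ε + 1) with hη_def
  have hηpos : 0 < η := by positivity
  have hjp : (0 : ℝ) < (j : ℝ) + 1 := by positivity
  have hη1 : η ≤ 1 := by
    rw [hη_def, div_le_one (by positivity)]
    nlinarith
  have hηε : η * ε ≤ 1 / (2 * ((j : ℝ) + 1)) := by
    rw [hη_def, div_mul_eq_mul_div, div_le_div_iff₀ (by positivity) (by positivity)]
    nlinarith
  -- choose n
  obtain ⟨n₀, hn₀⟩ := pow_unbounded_of_one_lt (max (1 / ε) (2 * ((j : ℝ) + 1))) one_lt_two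
  set n : ℕ := n₀ + 1 with hn_def
  have hn1 : 1 ≤ n := Nat.le_add_left 1 n₀
  have hpow : max (1 / ε) (2 * ((j : ℝ) + 1)) < (2 : ℝ) ^ n :=
    lt_of_lt_of_le hn₀ (pow_le_pow_right₀ one_le_two (Nat.le_succ n₀))
  have hm0 : (0 : ℝ) < 2 ^ n := by positivity
  have hεn : 1 ≤ (2 : ℝ) ^ n * ε := by
    have h := lt_of_le_of_lt (le_max_left (1 / ε) (2 * ((j : ℝ) + 1))) hpow
    rw [div_lt_iff₀ hε] at h
    nlinarith
  have hjm : 2 * ((j : ℝ) + 1) ≤ 2 ^ n :=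
    le_of_lt (lt_of_le_of_lt (le_max_right _ _) hpow)
  have hminv : 1 / (2 : ℝ) ^ n ≤ 1 / (2 * ((j : ℝ) + 1)) :=
    one_div_le_one_div_of_le (by positivity) hjm
  have hhalf : 1 / (2 * ((j : ℝ) + 1)) + 1 / (2 * ((j : ℝ) + 1)) = θ := by
    rw [hθ_def, ← two_mul, mul_one_div, div_eq_div_iff (by positivity) (by positivity)]
    ring
  have hηε0 : 0 ≤ η * ε := by positivity
  have h1 : 1 / (2 : ℝ) ^ n + η * ε / 2 ≤ θ := by linarith
  have h2 : η * ε + 1 / (2 : ℝ) ^ n ≤ θ := by linarith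
  -- coverage
  have hcover := Langlie.coverage hε hε' hηpos hη1 hx n hn1 hεn h1 h2
  have hsub2 : A ∩ Set.Icc θ (1 - θ)
      ⊆ ⋃ k ∈ Finset.range (2 ^ n),
        (A ∩ Set.Icc ((x + (1 - 2 * ε) * k) / 2 ^ n + η * ε / 2 * (1 - 2 / 2 ^ n))
          ((x + (1 - 2 * ε) * k) / 2 ^ n + η * ε / 2 * (1 - 2 / 2 ^ n)
            + (ε + (1 - η) * ε * (1 - 2 / 2 ^ n)))) := by
    rintro u ⟨h1u, h2u⟩
    obtain ⟨k, hk, hmem⟩ := Set.mem_iUnion₂.1 (hcover h2u)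
    exact Set.mem_iUnion₂.2 ⟨k, hk, h1u, hmem⟩
  obtain ⟨k, hkrange, hkpos⟩ : ∃ k ∈ Finset.range (2 ^ n),
      0 < volume (A ∩ Set.Icc ((x + (1 - 2 * ε) * k) / 2 ^ n + η * ε / 2 * (1 - 2 / 2 ^ n))
        ((x + (1 - 2 * ε) * k) / 2 ^ n + η * ε / 2 * (1 - 2 / 2 ^ n)
          + (ε + (1 - η) * ε * (1 - 2 / 2 ^ n)))) := by
    by_contra h
    push_neg at h
    have hz : volume (⋃ k ∈ Finset.range (2 ^ n),
        (A ∩ Set.Icc ((x + (1 - 2 * ε) * k) / 2 ^ n + η * ε / 2 * (1 - 2 / 2 ^ n))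
          ((x + (1 - 2 * ε) * k) / 2 ^ n + η * ε / 2 * (1 - 2 / 2 ^ n)
            + (ε + (1 - η) * ε * (1 - 2 / 2 ^ n))))) = 0 := by
      refine (measure_biUnion_null_iff (Finset.range (2 ^ n)).countable_toSet).2 ?_
      intro k hk
      exact le_antisymm (h k hk) zero_le
    exact hj.ne' (measure_mono_null hsub2 hz)
  -- main bound
  have hbound := Langlie.main_bound hH'm hε hε' hηpos hη1 hH'bounds n hn1 x hx
    k (Finset.mem_range.1 hkrange) A hA
  have hD0 : (ENNReal.ofReal c * (ENNReal.ofReal ε)⁻¹ * ENNReal.ofReal (η * ε / 2)) ≠ 0 := by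
    refine mul_ne_zero (mul_ne_zero ?_ ?_) ?_
    · exact (ENNReal.ofReal_pos.2 hc).ne'
    · exact ENNReal.inv_ne_zero.2 ENNReal.ofReal_ne_top
    · exact (ENNReal.ofReal_pos.2 (by positivity)).ne'
  have hDn0 : (ENNReal.ofReal c * (ENNReal.ofReal ε)⁻¹ * ENNReal.ofReal (η * ε / 2)) ^ n ≠ 0 :=
    pow_ne_zero n hD0
  have hpos : 0 < (ENNReal.ofReal c * (ENNReal.ofReal ε)⁻¹ * ENNReal.ofReal (η * ε / 2)) ^ n *
      volume (A ∩ Set.Icc ((x + (1 - 2 * ε) * k) / 2 ^ n + η * ε / 2 * (1 - 2 / 2 ^ n))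
        ((x + (1 - 2 * ε) * k) / 2 ^ n + η * ε / 2 * (1 - 2 / 2 ^ n)
          + (ε + (1 - η) * ε * (1 - 2 / 2 ^ n)))) :=
    ENNReal.mul_pos hDn0 hkpos.ne'
  refine ⟨n, hn1, ?_⟩
  rw [Langlie.transfer hε hε' hagree n x hx]
  exact lt_of_lt_of_le hpos hbound
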